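/- For all real numbers a, b, the normalized mode sum with the square-root weight converges: lim_{N→∞} (2/(πN)) Σ_{l=1}^{N−1} (1 − (l/N)²)^{−1/2} sin(a l/N) sin(b l/N) = (1/π) ∫₀¹ (cos((a−b)s) − cos((a+b)s)) (1 − s²)^{−1/2} ds. (This limit equals (1/2)[J₀(a−b) − J₀(a+b)] in terms of the Bessel function of the first kind of order 0.) -/

import Mathlib

open Real Filter intervalIntegral MeasureTheory

noncomputable def f11 (a b : ℝ) (s : ℝ) : ℝ :=
  (Real.cos ((a - b) * s) - Real.cos ((a + b) * s)) / Real.sqrt (1 - s ^ 2)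

noncomputable def F11 (a b : ℝ) (N : ℕ) (s : ℝ) : ℝ :=
  f11 a b ((⌊(N : ℝ) * s⌋₊ : ℝ) / N)

lemma f11_eq (a b t : ℝ) :
    f11 a b t = 2 * Real.sin (a * t) * Real.sin (b * t) / Real.sqrt (1 - t ^ 2) := by
  unfold f11
  rw [Real.cos_sub_cos]
  have h1 : ((a - b) * t + (a + b) * t) / 2 = a * t := by ring
  have h2 : ((a - b) * t - (a + b) * t) / 2 = -(b * t) := by ring
  rw [h1, h2, Real.sin_neg]
  ring

lemma f11_zero (a b : ℝ) : f11 a b 0 = 0 := by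
  simp [f11]

lemma f11_bound (a b t s : ℝ) (ht : 0 ≤ t) (hts : t ≤ s) (hs : s < 1) :
    |f11 a b t| ≤ 2 / Real.sqrt (1 - s ^ 2) := by
  have hs0 : 0 ≤ s := ht.trans hts
  have h1 : (0:ℝ) < 1 - s ^ 2 := by nlinarith
  have h2 : 1 - s ^ 2 ≤ 1 - t ^ 2 := by nlinarith
  have h3 : 0 < Real.sqrt (1 - s ^ 2) := Real.sqrt_pos.2 h1
  have h4 : Real.sqrt (1 - s ^ 2) ≤ Real.sqrt (1 - t ^ 2) := Real.sqrt_le_sqrt h2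
  have h5 : 0 < Real.sqrt (1 - t ^ 2) := lt_of_lt_of_le h3 h4
  have hnum : |Real.cos ((a - b) * t) - Real.cos ((a + b) * t)| ≤ 2 := by
    have i1 := Real.neg_one_le_cos ((a - b) * t)
    have i2 := Real.cos_le_one ((a - b) * t)
    have i3 := Real.neg_one_le_cos ((a + b) * t)
    have i4 := Real.cos_le_one ((a + b) * t)
    rw [abs_le]; constructor <;> nlinarith
  unfold f11
  rw [abs_div, abs_of_nonneg (Real.sqrt_nonneg _)]
  calc |Real.cos ((a - b) * t) - Real.cos ((a + b) * t)| / Real.sqrt (1 - t ^ 2)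
      ≤ 2 / Real.sqrt (1 - t ^ 2) := by gcongr
    _ ≤ 2 / Real.sqrt (1 - s ^ 2) := by gcongr

lemma bound_integrable11 :
    IntegrableOn (fun s : ℝ => 2 / Real.sqrt (1 - s ^ 2)) (Set.Ioo 0 1) := by
  have h1 : IntervalIntegrable (fun x : ℝ => x ^ (-(1/2) : ℝ)) MeasureTheory.volume 0 1 :=
    intervalIntegrable_rpow' (by norm_num)
  have h2 : IntervalIntegrable (fun x : ℝ => (1 - x) ^ (-(1/2) : ℝ)) MeasureTheory.volume 0 1 := by
    have := (h1.comp_sub_left 1).symm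
    norm_num at this
    exact this
  have h3 : IntegrableOn (fun x : ℝ => (1 - x) ^ (-(1/2) : ℝ)) (Set.Ioo 0 1) :=
    (intervalIntegrable_iff_integrableOn_Ioo_of_le zero_le_one).1 h2
  have h4 : IntegrableOn (fun x : ℝ => 2 * (1 - x) ^ (-(1/2) : ℝ)) (Set.Ioo 0 1) :=
    h3.const_mul 2
  refine h4.mono' ?_ ?_
  · apply Measurable.aestronglyMeasurable
    fun_prop
  · refine (MeasureTheory.ae_restrict_iff' measurableSet_Ioo).2
      (Filter.Eventually.of_forall fun s hs => ?_)
    obtain ⟨hs0, hs1⟩ := hs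
    have e1 : (0:ℝ) < 1 - s := by linarith
    have e2 : (0:ℝ) < 1 - s ^ 2 := by nlinarith
    have e3 : Real.sqrt (1 - s) ≤ Real.sqrt (1 - s ^ 2) :=
      Real.sqrt_le_sqrt (by nlinarith)
    have e4 : 0 < Real.sqrt (1 - s) := Real.sqrt_pos.2 e1
    have e5 : (1 - s) ^ (-(1/2) : ℝ) = 1 / Real.sqrt (1 - s) := by
      rw [Real.rpow_neg e1.le, Real.sqrt_eq_rpow]; exact (one_div _).symm
    rw [Real.norm_eq_abs, abs_of_nonneg (by positivity), e5]
    rw [mul_one_div]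
    gcongr

lemma key11 (a b : ℝ) (N : ℕ) (hN : 1 ≤ N) :
    ∫ s in Set.Ioo (0:ℝ) 1, F11 a b N s
      = ∑ l ∈ Finset.range N, (1 / (N:ℝ)) * f11 a b ((l:ℝ) / N) := by
  have hN0 : (0:ℝ) < N := by exact_mod_cast hN
  have main : ∀ m : ℕ, m ≤ N →
      IntegrableOn (F11 a b N) (Set.Ico 0 ((m:ℝ)/N)) ∧
      ∫ s in Set.Ico (0:ℝ) ((m:ℝ)/N), F11 a b N s
        = ∑ l ∈ Finset.range m, (1/(N:ℝ)) * f11 a b ((l:ℝ)/N) := by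
    intro m
    induction m with
    | zero => intro _; simp
    | succ m ih =>
      intro hm
      obtain ⟨ihint, ihval⟩ := ih (Nat.le_of_succ_le hm)
      have h0m : (0:ℝ) ≤ (m:ℝ)/N := by positivity
      have hmm : (m:ℝ)/N ≤ ((m:ℝ)+1)/N := by gcongr <;> linarith
      have hconst : Set.EqOn (F11 a b N) (fun _ => f11 a b ((m:ℝ)/N))
          (Set.Ico ((m:ℝ)/N) (((m:ℝ)+1)/N)) := by
        intro s hs
        obtain ⟨hs1, hs2⟩ := hs
        have k1 : (m:ℝ) ≤ s * N := (div_le_iff₀ hN0).1 hs1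
        have k2 : s * N < (m:ℝ) + 1 := (lt_div_iff₀ hN0).1 hs2
        have hfl : ⌊(N:ℝ) * s⌋₊ = m := by
          rw [Nat.floor_eq_iff (by nlinarith)]
          constructor
          · calc ((m:ℕ):ℝ) ≤ s * N := k1
              _ = (N:ℝ) * s := mul_comm _ _
          · calc (N:ℝ) * s = s * N := mul_comm _ _
              _ < (m:ℝ) + 1 := k2
        show f11 a b ((⌊(N : ℝ) * s⌋₊ : ℝ) / N) = _
        rw [hfl]
      have hmeasIco : MeasurableSet (Set.Ico ((m:ℝ)/N) (((m:ℝ)+1)/N)) := measurableSet_Ico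
      have hpieceint : IntegrableOn (F11 a b N) (Set.Ico ((m:ℝ)/N) (((m:ℝ)+1)/N)) := by
        refine (IntegrableOn.congr_fun ?_ hconst.symm hmeasIco)
        exact MeasureTheory.integrableOn_const measure_Ico_lt_top.ne
      have hdisj : Disjoint (Set.Ico (0:ℝ) ((m:ℝ)/N)) (Set.Ico ((m:ℝ)/N) (((m:ℝ)+1)/N)) := by
        apply Set.disjoint_left.2
        rintro x ⟨_, h2⟩ ⟨h3, _⟩
        exact absurd h3 (not_le.2 h2)
      have hsplit : Set.Ico (0:ℝ) (((m:ℝ)+1)/N)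
          = Set.Ico 0 ((m:ℝ)/N) ∪ Set.Ico ((m:ℝ)/N) (((m:ℝ)+1)/N) :=
        (Set.Ico_union_Ico_eq_Ico h0m hmm).symm
      have hcast : ((m+1:ℕ):ℝ)/N = ((m:ℝ)+1)/N := by push_cast; ring
      constructor
      · rw [hcast, hsplit]
        exact ihint.union hpieceint
      · rw [hcast, hsplit,
          MeasureTheory.setIntegral_union hdisj hmeasIco ihint hpieceint, ihval,
          MeasureTheory.setIntegral_congr_fun hmeasIco hconst,
          MeasureTheory.setIntegral_const, Finset.sum_range_succ]
        congr 1
        rw [Real.volume_real_Ico_of_le hmm, smul_eq_mul]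
        congr 1
        field_simp
        ring
  obtain ⟨_, hval⟩ := main N le_rfl
  rw [← MeasureTheory.integral_Ico_eq_integral_Ioo, ← hval]
  rw [div_self hN0.ne']

/-- large-`N` limit of the normalized mode sum with the square-root
weight, `(2/(πN)) Σ_{l=1}^{N−1} (1 − (l/N)²)^{−1/2} sin(al/N) sin(bl/N) →
(1/π) ∫₀¹ (cos((a−b)s) − cos((a+b)s)) (1 − s²)^{−1/2} ds`. -/
theorem stmt_11 (a b : ℝ) :
    Tendsto (fun N : ℕ =>
        (2 / (Real.pi * N)) * ∑ l ∈ Finset.Ico 1 N,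
          (1 / Real.sqrt (1 - ((l : ℝ) / N) ^ 2)) *
            Real.sin (a * l / N) * Real.sin (b * l / N))
      atTop
      (nhds ((1 / Real.pi) * ∫ s in (0 : ℝ)..1,
        (Real.cos ((a - b) * s) - Real.cos ((a + b) * s)) / Real.sqrt (1 - s ^ 2))) := by
  have hmeas : ∀ N : ℕ, AEStronglyMeasurable (F11 a b N)
      (MeasureTheory.volume.restrict (Set.Ioo (0:ℝ) 1)) := by
    intro N
    have h1 : Measurable fun s : ℝ => ⌊(N:ℝ) * s⌋₊ := (measurable_id.const_mul _).nat_floor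
    have h2 : Measurable (F11 a b N) :=
      (measurable_from_top (f := fun n : ℕ => f11 a b ((n:ℝ)/N))).comp h1
    exact h2.aestronglyMeasurable
  have hts_le : ∀ (N : ℕ) (s : ℝ), 0 ≤ s → (⌊(N:ℝ)*s⌋₊ : ℝ)/N ≤ s := by
    intro N s hs0
    rcases Nat.eq_zero_or_pos N with h | h
    · subst h; simpa using hs0
    · have hN0 : (0:ℝ) < N := by exact_mod_cast h
      rw [div_le_iff₀ hN0]
      calc (⌊(N:ℝ)*s⌋₊ : ℝ) ≤ (N:ℝ)*s := Nat.floor_le (by positivity)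
        _ = s * N := mul_comm _ _
  have h_bound : ∀ N : ℕ, ∀ᵐ s ∂(MeasureTheory.volume.restrict (Set.Ioo (0:ℝ) 1)),
      ‖F11 a b N s‖ ≤ 2 / Real.sqrt (1 - s ^ 2) := by
    intro N
    refine (MeasureTheory.ae_restrict_iff' measurableSet_Ioo).2
      (Filter.Eventually.of_forall fun s hs => ?_)
    obtain ⟨hs0, hs1⟩ := hs
    rw [Real.norm_eq_abs]
    exact f11_bound a b _ s (by positivity) (hts_le N s hs0.le) hs1
  have h_lim : ∀ᵐ s ∂(MeasureTheory.volume.restrict (Set.Ioo (0:ℝ) 1)),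
      Tendsto (fun N : ℕ => F11 a b N s) atTop (nhds (f11 a b s)) := by
    refine (MeasureTheory.ae_restrict_iff' measurableSet_Ioo).2
      (Filter.Eventually.of_forall fun s hs => ?_)
    obtain ⟨hs0, hs1⟩ := hs
    have hcont : ContinuousAt (fun t : ℝ =>
        (Real.cos ((a - b) * t) - Real.cos ((a + b) * t)) / Real.sqrt (1 - t ^ 2)) s :=
      ContinuousAt.div (by fun_prop) (by fun_prop)
        (Real.sqrt_pos.2 (by nlinarith)).ne'
    have htt : Tendsto (fun N : ℕ => (⌊(N:ℝ)*s⌋₊ : ℝ)/N) atTop (nhds s) := by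
      apply tendsto_of_tendsto_of_tendsto_of_le_of_le'
        (g := fun N : ℕ => s - 1/(N:ℝ)) (h := fun _ : ℕ => s)
      · simpa using (tendsto_const_nhds (x := s)).sub tendsto_one_div_atTop_nhds_zero_nat
      · exact tendsto_const_nhds
      · filter_upwards [eventually_ge_atTop 1] with N hN
        have hN0 : (0:ℝ) < N := by exact_mod_cast hN
        rw [sub_le_iff_le_add, ← add_div, le_div_iff₀ hN0]
        have hfl := Nat.sub_one_lt_floor ((N:ℝ)*s)
        nlinarith [one_div_mul_cancel hN0.ne']
      · exact Filter.Eventually.of_forall fun N => hts_le N s hs0.le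
    exact hcont.tendsto.comp htt
  have hDCT := MeasureTheory.tendsto_integral_of_dominated_convergence
    (fun s => 2 / Real.sqrt (1 - s ^ 2)) hmeas bound_integrable11 h_bound h_lim
  have hfinal := hDCT.const_mul (1 / Real.pi)
  have htarget : (1 / Real.pi) * ∫ s in Set.Ioo (0:ℝ) 1, f11 a b s
      = (1 / Real.pi) * ∫ s in (0:ℝ)..1,
          (Real.cos ((a - b) * s) - Real.cos ((a + b) * s)) / Real.sqrt (1 - s ^ 2) := by
    rw [intervalIntegral.integral_of_le zero_le_one,
      MeasureTheory.integral_Ioc_eq_integral_Ioo]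
    rfl
  rw [← htarget]
  refine Tendsto.congr' ?_ hfinal
  filter_upwards [eventually_ge_atTop 1] with N hN
  have hN0 : (0:ℝ) < N := by exact_mod_cast hN
  rw [key11 a b N hN, Finset.range_eq_Ico,
    Finset.sum_eq_sum_Ico_succ_bot (by omega : 0 < N)]
  simp only [Nat.cast_zero, zero_div, f11_zero, mul_zero, zero_add]
  have hterm : ∀ l ∈ Finset.Ico 1 N, (1/(N:ℝ)) * f11 a b ((l:ℝ)/N)
      = 2/(N:ℝ) * (1 / Real.sqrt (1 - ((l:ℝ)/N) ^ 2) *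
          Real.sin (a * l / N) * Real.sin (b * l / N)) := by
    intro l _
    rw [f11_eq, show a * ((l:ℝ)/N) = a * l / N from (mul_div_assoc a _ _).symm,
      show b * ((l:ℝ)/N) = b * l / N from (mul_div_assoc b _ _).symm]
    ring
  rw [Finset.sum_congr rfl hterm, ← Finset.mul_sum]
  ring
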